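/- Let (Δ_n) be a sequence of positive reals such that for each n either Δ_{n+1} ≤ (1/2)·Δ_n or Δ_{n+1} ≤ Δ_n − δ·Δ_n², where δ = min{c, 1/Δ_0} for some constant c > 0. Then for every ε > 0, Δ_k ≤ ε holds for all k ≥ max{⌈log₂(Δ_0/ε)⌉, ⌈(Δ_0 − ε)/(δ·ε·Δ_0)⌉}. -/
import Mathlib


/-- Iteration complexity for the convex case (Theorem 4.6, scalar form):
if at each step either `Δ_{n+1} ≤ Δ_n/2` or `Δ_{n+1} ≤ Δ_n − δ Δ_n²` with
`δ = min{c, 1/Δ_0}`, then `Δ_k ≤ ε` for all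
`k ≥ max{⌈log₂(Δ_0/ε)⌉, ⌈(Δ_0 − ε)/(δ ε Δ_0)⌉}`. -/
theorem stmt1 (Δ : ℕ → ℝ) (c δ : ℝ) (hc : 0 < c)
    (hpos : ∀ n, 0 < Δ n)
    (hmono : ∀ n, Δ (n + 1) ≤ Δ n)
    (hδ : δ = min c (1 / Δ 0))
    (hrec : ∀ n, Δ (n + 1) ≤ (1 / 2) * Δ n ∨ Δ (n + 1) ≤ Δ n - δ * (Δ n) ^ 2) :
    ∀ ε : ℝ, 0 < ε → ε < Δ 0 →
      ∀ k : ℕ,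
        (max (⌈Real.logb 2 (Δ 0 / ε)⌉₊) (⌈(Δ 0 - ε) / (δ * ε * Δ 0)⌉₊)) ≤ k →
        Δ k ≤ ε := by
  have h0 := hpos 0
  have hδpos : 0 < δ := by
    rw [hδ]; exact lt_min hc (by positivity)
  have hδle : δ ≤ 1 / Δ 0 := by rw [hδ]; exact min_le_right _ _
  -- Δ n ≤ Δ 0
  have hle0 : ∀ n, Δ n ≤ Δ 0 := by
    intro n
    induction n with
    | zero => exact le_refl _
    | succ n ih => exact (hmono n).trans ih
  -- key: 1/Δ 0 + n δ ≤ 1/Δ n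
  have key : ∀ n : ℕ, 1 / Δ 0 + n * δ ≤ 1 / Δ n := by
    intro n
    induction n with
    | zero => simp
    | succ n ih =>
      have hn := hpos n
      have hn1 := hpos (n + 1)
      have step : 1 / Δ n + δ ≤ 1 / Δ (n + 1) := by
        rcases hrec n with h | h
        · have h2 : 1 / Δ (n + 1) ≥ 2 / Δ n := by
            rw [ge_iff_le, div_le_div_iff₀ hn hn1]
            nlinarith
          have hδn : δ ≤ 1 / Δ n := hδle.trans (by
            apply one_div_le_one_div_of_le hn (hle0 n))
          have h4 : 2 / Δ n = 1 / Δ n + 1 / Δ n := by ring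
          linarith [h2]
        · have hq : 0 < Δ n - δ * Δ n ^ 2 := lt_of_lt_of_le hn1 h
          have h2 : 1 / (Δ n - δ * Δ n ^ 2) ≤ 1 / Δ (n + 1) :=
            one_div_le_one_div_of_le hn1 h
          have h3 : 1 / Δ n + δ ≤ 1 / (Δ n - δ * Δ n ^ 2) := by
            rw [le_div_iff₀ hq]
            have : (1 / Δ n + δ) * (Δ n - δ * Δ n ^ 2)
                = 1 - δ ^ 2 * Δ n ^ 2 := by
              field_simp; ring
            rw [this]
            nlinarith
          linarith
      push_cast
      linarith
  intro ε hε hεΔ k hk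
  have hk2 : ⌈(Δ 0 - ε) / (δ * ε * Δ 0)⌉₊ ≤ k := le_trans (le_max_right _ _) hk
  have hkr : (Δ 0 - ε) / (δ * ε * Δ 0) ≤ (k : ℝ) :=
    le_trans (Nat.le_ceil _) (by exact_mod_cast hk2)
  have hden : 0 < δ * ε * Δ 0 := by positivity
  have hkδ : (Δ 0 - ε) / (ε * Δ 0) ≤ (k : ℝ) * δ := by
    rw [div_le_iff₀ hden] at hkr
    rw [div_le_iff₀ (by positivity)]
    nlinarith
  have hfin : 1 / ε ≤ 1 / Δ k := by
    have := key k
    have heq : 1 / Δ 0 + (Δ 0 - ε) / (ε * Δ 0) = 1 / ε := by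
      field_simp; ring
    linarith
  have hΔk := hpos k
  rw [div_le_div_iff₀ hε hΔk] at hfin
  nlinarith
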